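/- Let E ∈ L(X,Z) and A densely defined and closed with some λ > 0 in ϱ(E,A). If Re⟨Ax, Ex⟩_Z ≤ 0 for all x ∈ D(A), then for every λ > 0: λ ∈ ϱ(E,A) and ‖E(λE−A)⁻¹‖ ≤ 1/λ. -/

import Mathlib

open scoped InnerProductSpace

section Aux

variable {X Z : Type*}
    [NormedAddCommGroup X] [InnerProductSpace ℂ X] [CompleteSpace X]
    [NormedAddCommGroup Z] [InnerProductSpace ℂ Z] [CompleteSpace Z]

/-- Auxiliary predicate: `l ∈ ϱ(E,A)` with resolvent `R` satisfying `‖E R‖ ≤ 1/l`. -/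
def StmtGood (E : X →L[ℂ] Z) (A : X →ₗ.[ℂ] Z) (l : ℝ) : Prop :=
  ∃ R : Z →L[ℂ] X, (∀ z : Z, R z ∈ A.domain) ∧
    (∀ (z : Z) (h : R z ∈ A.domain), (l : ℂ) • E (R z) - A ⟨R z, h⟩ = z) ∧
    (∀ x : A.domain, R ((l : ℂ) • E (x : X) - A x) = x) ∧
    ‖E.comp R‖ ≤ 1 / l

lemma stmt_diss_est (E : X →L[ℂ] Z) (A : X →ₗ.[ℂ] Z)
    (hdiss : ∀ x : A.domain, (⟪A x, E (x : X)⟫_ℂ).re ≤ 0)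
    (l : ℝ) (hl : 0 < l) (x : A.domain) :
    l * ‖E (x : X)‖ ≤ ‖(l : ℂ) • E (x : X) - A x‖ := by
  by_cases h0 : ‖E (x : X)‖ = 0
  · rw [h0, mul_zero]; exact norm_nonneg _
  have hpos : 0 < ‖E (x : X)‖ := lt_of_le_of_ne (norm_nonneg _) (Ne.symm h0)
  have h1 : (⟪(l : ℂ) • E (x : X) - A x, E (x : X)⟫_ℂ).re
      = l * (‖E (x : X)‖ * ‖E (x : X)‖) - (⟪A x, E (x : X)⟫_ℂ).re := by
    rw [inner_sub_left, inner_smul_left]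
    have hself : (⟪E (x : X), E (x : X)⟫_ℂ).re = ‖E (x : X)‖ * ‖E (x : X)‖ := by
      have := @inner_self_eq_norm_mul_norm ℂ Z _ _ _ (E (x : X))
      simpa using this
    simp [Complex.conj_ofReal, Complex.mul_re, Complex.ofReal_re, Complex.ofReal_im, hself]
    left; rw [← Complex.ofReal_pow, Complex.ofReal_re, sq]
  have h2 : l * (‖E (x : X)‖ * ‖E (x : X)‖)
      ≤ (⟪(l : ℂ) • E (x : X) - A x, E (x : X)⟫_ℂ).re := by
    rw [h1]; linarith [hdiss x]
  have h3 : (⟪(l : ℂ) • E (x : X) - A x, E (x : X)⟫_ℂ).re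
      ≤ ‖(l : ℂ) • E (x : X) - A x‖ * ‖E (x : X)‖ := by
    have := re_inner_le_norm (𝕜 := ℂ) ((l : ℂ) • E (x : X) - A x) (E (x : X))
    exact this
  have h4 : l * ‖E (x : X)‖ * ‖E (x : X)‖
      ≤ ‖(l : ℂ) • E (x : X) - A x‖ * ‖E (x : X)‖ := by
    rw [mul_assoc]; exact h2.trans h3
  exact le_of_mul_le_mul_right h4 hpos

lemma stmt_norm_bd (E : X →L[ℂ] Z) (A : X →ₗ.[ℂ] Z)
    (hdiss : ∀ x : A.domain, (⟪A x, E (x : X)⟫_ℂ).re ≤ 0)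
    (l : ℝ) (hl : 0 < l) (R : Z →L[ℂ] X)
    (hmem : ∀ z : Z, R z ∈ A.domain)
    (hsolve : ∀ (z : Z) (h : R z ∈ A.domain), (l : ℂ) • E (R z) - A ⟨R z, h⟩ = z) :
    ‖E.comp R‖ ≤ 1 / l := by
  apply ContinuousLinearMap.opNorm_le_bound _ (by positivity)
  intro z
  have hest := stmt_diss_est E A hdiss l hl ⟨R z, hmem z⟩
  rw [hsolve z (hmem z)] at hest
  rw [ContinuousLinearMap.comp_apply]
  calc ‖E (R z)‖ = (1 / l) * (l * ‖E (R z)‖) := by field_simp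
    _ ≤ (1 / l) * ‖z‖ := by
        apply mul_le_mul_of_nonneg_left _ (by positivity)
        exact hest

lemma stmt_step (E : X →L[ℂ] Z) (A : X →ₗ.[ℂ] Z)
    (hdiss : ∀ x : A.domain, (⟪A x, E (x : X)⟫_ℂ).re ≤ 0)
    (m l : ℝ) (hm : 0 < m) (hl : 0 < l) (hlm : |l - m| < m)
    (hP : StmtGood E A m) : StmtGood E A l := by
  obtain ⟨R, hmem, hsolve, hinv, hnorm⟩ := hP
  set t : Z →L[ℂ] Z := ((l - m : ℝ) : ℂ) • (E.comp R) with ht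
  have htnorm : ‖t‖ < 1 := by
    rw [ht, norm_smul, Complex.norm_real, Real.norm_eq_abs]
    calc |l - m| * ‖E.comp R‖ ≤ |l - m| * (1 / m) :=
          mul_le_mul_of_nonneg_left hnorm (abs_nonneg _)
      _ < m * (1 / m) := by
          apply mul_lt_mul_of_pos_right hlm (by positivity)
      _ = 1 := by field_simp
  have hneg : ‖-t‖ < 1 := by rwa [norm_neg]
  set u : (Z →L[ℂ] Z)ˣ := Units.oneSub (-t) hneg with hu
  have huval : (u : Z →L[ℂ] Z) = 1 + t := by
    rw [hu]; simp [Units.oneSub, sub_neg_eq_add]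
  -- key algebraic identity: for x ∈ dom, (l E - A) x = u ((m E - A) x)
  have hkey : ∀ x : A.domain,
      (l : ℂ) • E (x : X) - A x = (u : Z →L[ℂ] Z) ((m : ℂ) • E (x : X) - A x) := by
    intro x
    rw [huval, ContinuousLinearMap.add_apply, ContinuousLinearMap.one_apply,
      ht, ContinuousLinearMap.smul_apply, ContinuousLinearMap.comp_apply, hinv x]
    have : (l : ℂ) = (m : ℂ) + ((l - m : ℝ) : ℂ) := by push_cast; ring
    rw [this, add_smul]
    abel
  refine ⟨R.comp ((u⁻¹ : (Z →L[ℂ] Z)ˣ) : Z →L[ℂ] Z), fun z => hmem _, ?_, ?_, ?_⟩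
  · intro z h
    set w : Z := ((u⁻¹ : (Z →L[ℂ] Z)ˣ) : Z →L[ℂ] Z) z with hw
    have hRz : (R.comp ((u⁻¹ : (Z →L[ℂ] Z)ˣ) : Z →L[ℂ] Z)) z = R w := rfl
    have hx := hkey ⟨R w, hmem w⟩
    have hsw := hsolve w (hmem w)
    -- (l E - A)(R w) = u ((m E - A)(R w)) = u w = z
    have : (l : ℂ) • E (R w) - A ⟨R w, hmem w⟩ = (u : Z →L[ℂ] Z) w := by
      rw [hx]; exact congrArg _ hsw
    calc (l : ℂ) • E ((R.comp ((u⁻¹ : (Z →L[ℂ] Z)ˣ) : Z →L[ℂ] Z)) z) -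
          A ⟨(R.comp ((u⁻¹ : (Z →L[ℂ] Z)ˣ) : Z →L[ℂ] Z)) z, h⟩
        = (l : ℂ) • E (R w) - A ⟨R w, hmem w⟩ := rfl
      _ = (u : Z →L[ℂ] Z) w := this
      _ = ((u : Z →L[ℂ] Z) * ((u⁻¹ : (Z →L[ℂ] Z)ˣ) : Z →L[ℂ] Z)) z := rfl
      _ = z := by rw [u.mul_inv]; rfl
  · intro x
    have hkx := hkey x
    rw [ContinuousLinearMap.comp_apply, hkx]
    have : (((u⁻¹ : (Z →L[ℂ] Z)ˣ) : Z →L[ℂ] Z) ((u : Z →L[ℂ] Z) ((m : ℂ) • E (x : X) - A x)))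
        = (m : ℂ) • E (x : X) - A x := by
      have := u.inv_mul
      calc ((u⁻¹ : (Z →L[ℂ] Z)ˣ) : Z →L[ℂ] Z) ((u : Z →L[ℂ] Z) ((m : ℂ) • E (x : X) - A x))
          = (((u⁻¹ : (Z →L[ℂ] Z)ˣ) : Z →L[ℂ] Z) * (u : Z →L[ℂ] Z)) ((m : ℂ) • E (x : X) - A x) := rfl
        _ = (m : ℂ) • E (x : X) - A x := by rw [u.inv_mul]; rfl
    rw [this, hinv x]
  · apply stmt_norm_bd E A hdiss l hl
      (R.comp ((u⁻¹ : (Z →L[ℂ] Z)ˣ) : Z →L[ℂ] Z)) (fun z => hmem _)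
    intro z h
    set w : Z := ((u⁻¹ : (Z →L[ℂ] Z)ˣ) : Z →L[ℂ] Z) z with hw
    have hx := hkey ⟨R w, hmem w⟩
    have hsw := hsolve w (hmem w)
    have : (l : ℂ) • E (R w) - A ⟨R w, hmem w⟩ = (u : Z →L[ℂ] Z) w := by
      rw [hx]; exact congrArg _ hsw
    calc (l : ℂ) • E ((R.comp ((u⁻¹ : (Z →L[ℂ] Z)ˣ) : Z →L[ℂ] Z)) z) -
          A ⟨(R.comp ((u⁻¹ : (Z →L[ℂ] Z)ˣ) : Z →L[ℂ] Z)) z, h⟩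
        = (l : ℂ) • E (R w) - A ⟨R w, hmem w⟩ := rfl
      _ = (u : Z →L[ℂ] Z) w := this
      _ = ((u : Z →L[ℂ] Z) * ((u⁻¹ : (Z →L[ℂ] Z)ˣ) : Z →L[ℂ] Z)) z := rfl
      _ = z := by rw [u.mul_inv]; rfl

end Aux

/-- If some `λ > 0` lies in `ϱ(E,A)` and `Re⟨Ax, Ex⟩ ≤ 0` on `D(A)`, then every
`λ > 0` lies in `ϱ(E,A)` and `‖E(λE−A)⁻¹‖ ≤ 1/λ`. -/
theorem stmt5 {X Z : Type*}
    [NormedAddCommGroup X] [InnerProductSpace ℂ X] [CompleteSpace X]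
    [NormedAddCommGroup Z] [InnerProductSpace ℂ Z] [CompleteSpace Z]
    (E : X →L[ℂ] Z) (A : X →ₗ.[ℂ] Z)
    (hdense : Dense (A.domain : Set X))
    (hclosed : IsClosed (A.graph : Set (X × Z)))
    (l₀ : ℝ) (hl₀ : 0 < l₀)
    (hres : ∃ R₀ : Z →L[ℂ] X, (∀ z : Z, R₀ z ∈ A.domain) ∧
      (∀ (z : Z) (h : R₀ z ∈ A.domain), (l₀ : ℂ) • E (R₀ z) - A ⟨R₀ z, h⟩ = z) ∧
      (∀ x : A.domain, R₀ ((l₀ : ℂ) • E (x : X) - A x) = x))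
    (hdiss : ∀ x : A.domain, (⟪A x, E (x : X)⟫_ℂ).re ≤ 0) :
    ∀ l : ℝ, 0 < l →
      ∃ R : Z →L[ℂ] X, (∀ z : Z, R z ∈ A.domain) ∧
        (∀ (z : Z) (h : R z ∈ A.domain), (l : ℂ) • E (R z) - A ⟨R z, h⟩ = z) ∧
        (∀ x : A.domain, R ((l : ℂ) • E (x : X) - A x) = x) ∧
        ‖E.comp R‖ ≤ 1 / l := by
  have hbase : StmtGood E A l₀ := by
    obtain ⟨R₀, h1, h2, h3⟩ := hres
    exact ⟨R₀, h1, h2, h3, stmt_norm_bd E A hdiss l₀ hl₀ R₀ h1 h2⟩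
  have hind : ∀ n : ℕ, StmtGood E A ((3/2 : ℝ) ^ n * l₀) := by
    intro n
    induction n with
    | zero => simpa using hbase
    | succ n ih =>
      have hmpos : (0:ℝ) < (3/2 : ℝ) ^ n * l₀ := by positivity
      apply stmt_step E A hdiss ((3/2 : ℝ) ^ n * l₀) _ hmpos (by positivity) _ ih
      rw [abs_sub_lt_iff]
      constructor
      · rw [pow_succ]; nlinarith [pow_pos (by norm_num : (0:ℝ) < 3/2) n]
      · rw [pow_succ]; nlinarith [pow_pos (by norm_num : (0:ℝ) < 3/2) n]
  intro l hl
  obtain ⟨n, hn⟩ := pow_unbounded_of_one_lt (l / (2 * l₀)) (by norm_num : (1:ℝ) < 3/2)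
  have hmpos : (0:ℝ) < (3/2 : ℝ) ^ n * l₀ := by positivity
  have hl2m : l < 2 * ((3/2 : ℝ) ^ n * l₀) := by
    rw [div_lt_iff₀ (by positivity)] at hn
    nlinarith
  exact stmt_step E A hdiss ((3/2 : ℝ) ^ n * l₀) l hmpos hl
    (by rw [abs_sub_lt_iff]; constructor <;> linarith) (hind n)
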